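/- arXiv:1203.1449 — 6 statements merged into one kernel-verified Lean document; each statement's English description precedes it below -/
import Mathlib

section
/- Let R be a Noetherian commutative ring with an endomorphism σ such that R has no nontrivial ideals I with σ(I) ⊆ I (i.e., R is σ-simple). Then R is reduced, and the σ-constants R^σ = {r : σ(r) = r} form a field. -/
/-- A Noetherian commutative ring `R` with an endomorphism `σ` that is `σ`-simple
(no nontrivial ideals `I` with `σ(I) ⊆ I`) is reduced, and its `σ`-constants
`{r : σ(r) = r}` form a field. -/
theorem sigma_simple_noetherian_reduced_constants_field
    (R : Type*) [CommRing R] [IsNoetherianRing R] (σ : R →+* R)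
    (hnt : (⊥ : Ideal R) ≠ ⊤)
    (hsimple : ∀ I : Ideal R, (∀ x ∈ I, σ x ∈ I) → I = ⊥ ∨ I = ⊤) :
    IsReduced R ∧ IsField (RingHom.eqLocus σ (RingHom.id R)) := by
  have hone : (1 : R) ≠ 0 := by
    intro h
    apply hnt
    apply Ideal.eq_top_iff_one _ |>.mpr
    rw [h]; exact Submodule.zero_mem _
  constructor
  · -- nilradical is σ-stable
    have : nilradical R = ⊥ ∨ nilradical R = ⊤ := by
      apply hsimple
      intro x hx
      rw [mem_nilradical] at hx ⊢
      obtain ⟨n, hn⟩ := hx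
      exact ⟨n, by rw [← map_pow, hn, map_zero]⟩
    rcases this with h | h
    · constructor
      intro x hx
      have : x ∈ nilradical R := hx
      rw [h] at this
      simpa using this
    · exfalso
      have : (1 : R) ∈ nilradical R := h ▸ trivial
      obtain ⟨n, hn⟩ := this
      simp at hn
      exact hone hn
  · refine ⟨⟨1, 0, ?_⟩, mul_comm, ?_⟩
    · intro h
      exact hone (congrArg Subtype.val h)
    · rintro ⟨c, hc⟩ hne
      have hc' : σ c = c := hc
      have hc0 : c ≠ 0 := by
        intro h; apply hne; ext; exact h
      -- annihilator of c is σ-stable, hence ⊥, so c is a nonzerodivisor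
      have hann : ∀ x : R, x * c = 0 → x = 0 := by
        set J : Ideal R :=
          { carrier := {x | x * c = 0}
            add_mem' := fun ha hb => by
              simp only [Set.mem_setOf_eq] at *
              rw [add_mul, ha, hb, add_zero]
            zero_mem' := by simp
            smul_mem' := fun r x hx => by
              simp only [Set.mem_setOf_eq, smul_eq_mul] at *
              rw [mul_assoc, hx, mul_zero] } with hJ
        have hmem : ∀ x : R, x ∈ J ↔ x * c = 0 := fun x => Iff.rfl
        rcases hsimple J (by
          intro x hx
          rw [hmem] at hx ⊢
          have : σ (x * c) = 0 := by rw [hx, map_zero]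
          rwa [map_mul, hc'] at this) with h | h
        · intro x hx
          have : x ∈ J := (hmem x).mpr hx
          rw [h] at this; simpa using this
        · exfalso
          have : (1 : R) ∈ J := h ▸ trivial
          rw [hmem, one_mul] at this
          exact hc0 this
      -- span of c is σ-stable, hence ⊤
      have hspan : Ideal.span {c} = ⊤ := by
        rcases hsimple (Ideal.span {c}) (by
          intro x hx
          rw [Ideal.mem_span_singleton] at hx ⊢
          obtain ⟨r, rfl⟩ := hx
          exact ⟨σ r, by rw [map_mul, hc']⟩) with h | h
        · exfalso
          apply hc0
          have : c ∈ Ideal.span {c} := Ideal.mem_span_singleton_self c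
          rw [h] at this; simpa using this
        · exact h
      have : (1 : R) ∈ Ideal.span {c} := hspan ▸ trivial
      rw [Ideal.mem_span_singleton] at this
      obtain ⟨r, hr⟩ := this
      have hrc : r * c = 1 := by rw [mul_comm]; exact hr.symm
      have hrfix : σ r = r := by
        have h1 : σ r * c = 1 := by
          have := congrArg σ hrc
          rw [map_mul, hc', map_one] at this
          exact this
        have : (σ r - r) * c = 0 := by rw [sub_mul, h1, hrc, sub_self]
        exact sub_eq_zero.mp (hann _ this)
      refine ⟨⟨r, hrfix⟩, ?_⟩
      ext
      simpa [mul_comm] using hrc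
end

section
/- Let K be a difference field, A ∈ GLₙ(K), and R = K[Y_ij, 1/det Y] a K-σ-algebra generated by a fundamental solution matrix Y ∈ GLₙ(R) with σ(Y) = A·Y. Then every element of R is σ-finite over K, i.e., satisfies a linear difference equation with coefficients in K. -/
/-- `f` is σ-finite over `K`: it lies in a finite-dimensional `K`-subspace of `R`
stable under `σ`. -/
def IsSigmaFinite {K R : Type*} [Field K] [CommRing R] [Algebra K R]
    (σR : R →+* R) (f : R) : Prop :=
  ∃ V : Submodule K R, V.FG ∧ f ∈ V ∧ ∀ x ∈ V, σR x ∈ V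

/-- If `R = K[Y_ij, 1/det Y]` is generated over the difference field `K` by a fundamental
solution matrix `Y` of `σ(y) = Ay` (with `A ∈ GLₙ(K)`), then every element of `R` is
σ-finite over `K`, i.e. satisfies a linear difference equation over `K`. -/
theorem picardVessiot_ring_elements_sigmaFinite
    (K R : Type*) [Field K] [CommRing R] [Algebra K R]
    (σK : K →+* K) (σR : R →+* R)
    (hcomp : ∀ (a : K) (r : R), σR (algebraMap K R a * r) = algebraMap K R (σK a) * σR r)
    (n : ℕ) (A : Matrix (Fin n) (Fin n) K) (hAdet : IsUnit A.det)
    (Y : Matrix (Fin n) (Fin n) R) (hYdet : IsUnit Y.det)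
    (hfs : Y.map σR = A.map (algebraMap K R) * Y)
    (hgen : Algebra.adjoin K
        ((Set.range fun p : Fin n × Fin n => Y p.1 p.2) ∪ {Ring.inverse Y.det}) = ⊤) :
    ∀ f : R, IsSigmaFinite (K := K) σR f := by
  intro f
  set G : Set R := (Set.range fun p : Fin n × Fin n => Y p.1 p.2) ∪ {Ring.inverse Y.det} with hG
  set W : Submodule K R := Submodule.span K (insert 1 G) with hW
  -- σ acting on scalars
  have hsmul : ∀ (c : K) (x : R), σR (c • x) = σK c • σR x := by
    intro c x
    rw [Algebra.smul_def, hcomp, ← Algebra.smul_def]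
  -- σ of the matrix entries
  have hσY : ∀ i j, σR (Y i j) ∈ W := by
    intro i j
    have h := congrFun (congrFun hfs i) j
    simp only [Matrix.map_apply, Matrix.mul_apply] at h
    rw [h]
    refine Submodule.sum_mem _ fun k _ => ?_
    rw [← Algebra.smul_def]
    exact Submodule.smul_mem _ _ (Submodule.subset_span
      (Set.mem_insert_of_mem _ (Or.inl ⟨(k, j), rfl⟩)))
  -- σ of det and its inverse
  have hdet : σR Y.det = algebraMap K R A.det * Y.det := by
    rw [RingHom.map_det, RingHom.mapMatrix_apply, hfs, Matrix.det_mul, ← RingHom.mapMatrix_apply, ← RingHom.map_det]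
  have hσinv : σR (Ring.inverse Y.det) =
      algebraMap K R (Ring.inverse A.det) * Ring.inverse Y.det := by
    have h1 : Ring.inverse Y.det * Y.det = 1 := Ring.inverse_mul_cancel _ hYdet
    have h2 : algebraMap K R (Ring.inverse A.det) * algebraMap K R A.det = 1 := by
      rw [← map_mul, Ring.inverse_mul_cancel _ hAdet, map_one]
    have key : σR (Ring.inverse Y.det) * (algebraMap K R A.det * Y.det) = 1 := by
      rw [← hdet, ← map_mul, h1, map_one]
    have hmul1 : (algebraMap K R A.det * Y.det) *
        (algebraMap K R (Ring.inverse A.det) * Ring.inverse Y.det) = 1 := by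
      calc (algebraMap K R A.det * Y.det) *
          (algebraMap K R (Ring.inverse A.det) * Ring.inverse Y.det)
          = (algebraMap K R (Ring.inverse A.det) * algebraMap K R A.det) *
            (Ring.inverse Y.det * Y.det) := by ring
        _ = 1 := by rw [h1, h2, mul_one]
    calc σR (Ring.inverse Y.det)
        = σR (Ring.inverse Y.det) * ((algebraMap K R A.det * Y.det) *
          (algebraMap K R (Ring.inverse A.det) * Ring.inverse Y.det)) := by rw [hmul1, mul_one]
      _ = (σR (Ring.inverse Y.det) * (algebraMap K R A.det * Y.det)) *
          (algebraMap K R (Ring.inverse A.det) * Ring.inverse Y.det) := by ring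
      _ = algebraMap K R (Ring.inverse A.det) * Ring.inverse Y.det := by rw [key, one_mul]
  -- W is stable under σ
  have hWstab : ∀ x ∈ W, σR x ∈ W := by
    intro x hx
    induction hx using Submodule.span_induction with
    | mem x hx =>
      rcases hx with rfl | hx
      · simpa using Submodule.subset_span (Set.mem_insert (1:R) G)
      · rcases hx with ⟨⟨i, j⟩, rfl⟩ | rfl
        · exact hσY i j
        · rw [hσinv, ← Algebra.smul_def]
          exact Submodule.smul_mem _ _ (Submodule.subset_span
            (Set.mem_insert_of_mem _ (Or.inr rfl)))
    | zero => simp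
    | add x y _ _ hx hy => rw [map_add]; exact Submodule.add_mem _ hx hy
    | smul c x _ hx => rw [hsmul]; exact Submodule.smul_mem _ _ hx
  -- powers of W are stable under σ
  have hpow : ∀ (N : ℕ), ∀ x ∈ W ^ N, σR x ∈ W ^ N := by
    intro N x hx
    induction hx using Submodule.pow_induction_on_left' with
    | algebraMap r =>
      rw [show σR (algebraMap K R r) = algebraMap K R (σK r) by
        simpa using hcomp r 1]
      exact Submodule.algebraMap_mem _
    | add x y i hx hy ihx ihy => rw [map_add]; exact Submodule.add_mem _ ihx ihy
    | mem_mul m hm i x hx ihx =>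
      rw [map_mul]
      rw [pow_succ']
      exact Submodule.mul_mem_mul (hWstab m hm) ihx
  have h1W : (1 : R) ∈ W := Submodule.subset_span (Set.mem_insert 1 G)
  -- monotonicity of powers
  have hmono' : ∀ a k : ℕ, W ^ a ≤ W ^ (a + k) := by
    intro a k
    induction k with
    | zero => simp
    | succ k ih =>
      intro x hx
      have : x * 1 ∈ W ^ (a + k) * W := Submodule.mul_mem_mul (ih hx) h1W
      rwa [mul_one, ← pow_succ] at this
  have hmono : ∀ a b : ℕ, a ≤ b → W ^ a ≤ W ^ b := by
    intro a b hab
    obtain ⟨k, rfl⟩ := Nat.exists_eq_add_of_le hab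
    exact hmono' a k
  -- f lies in some power of W
  have hf : ∃ N, f ∈ W ^ N := by
    have hf1 : f ∈ Submodule.span K (Submonoid.closure G : Set R) := by
      rw [← Algebra.adjoin_eq_span, hgen]; trivial
    induction hf1 using Submodule.span_induction with
    | mem x hx =>
      induction hx using Submonoid.closure_induction with
      | one =>
        exact ⟨0, by rw [pow_zero]; exact Submodule.one_le.mp le_rfl⟩
      | mem g hg =>
        exact ⟨1, by rw [pow_one]; exact Submodule.subset_span (Set.mem_insert_of_mem _ hg)⟩
      | mul x y _ _ ihx ihy =>
        obtain ⟨a, ha⟩ := ihx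
        obtain ⟨b, hb⟩ := ihy
        exact ⟨a + b, by rw [pow_add]; exact Submodule.mul_mem_mul ha hb⟩
    | zero => exact ⟨0, Submodule.zero_mem _⟩
    | add x y _ _ ihx ihy =>
      obtain ⟨a, ha⟩ := ihx
      obtain ⟨b, hb⟩ := ihy
      exact ⟨max a b, Submodule.add_mem _ (hmono a _ (le_max_left a b) ha)
        (hmono b _ (le_max_right a b) hb)⟩
    | smul c x _ ihx =>
      obtain ⟨a, ha⟩ := ihx
      exact ⟨a, Submodule.smul_mem _ _ ha⟩
  obtain ⟨N, hN⟩ := hf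
  refine ⟨W ^ N, ?_, hN, hpow N⟩
  have hWfg : W.FG := by
    apply Submodule.fg_span
    apply Set.Finite.insert
    exact (Set.finite_range _).union (Set.finite_singleton _)
  exact hWfg.pow N
end

section
/- Let k be a field of characteristic zero. The natural k̄-algebra homomorphism Seq_k ⊗_k k̄ → Seq_{k̄} (where k̄ is an algebraic closure of k) is injective. -/
open Filter TensorProduct

/-- The ring of `k`-valued sequences modulo eventual equality. -/
abbrev SeqRing (k : Type*) [CommRing k] : Type _ := Filter.Germ (Filter.atTop : Filter ℕ) k

noncomputable instance {k : Type*} [CommRing k] : Algebra k (SeqRing k) :=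
  ((Filter.Germ.coeRingHom _).comp (Pi.constRingHom ℕ k)).toAlgebra

noncomputable instance {k : Type*} [Field k] :
    Semiring ((AlgebraicClosure k) ⊗[k] (SeqRing k)) :=
  Algebra.TensorProduct.instSemiring

/-- The natural `k̄`-algebra homomorphism `Seq_k ⊗_k k̄ → Seq_{k̄}`, sending `c ⊗ f` to the
sequence `i ↦ c·f(i)`, is injective. -/
theorem seq_tensor_algebraicClosure_injective (k : Type*) [Field k] [CharZero k]
    (Φ : (AlgebraicClosure k) ⊗[k] (SeqRing k) →+* SeqRing (AlgebraicClosure k))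
    (hΦ : ∀ (c : AlgebraicClosure k) (f : ℕ → k),
      Φ (c ⊗ₜ (f : SeqRing k)) =
        ((fun i : ℕ => c * algebraMap k (AlgebraicClosure k) (f i)) : SeqRing (AlgebraicClosure k))) :
    Function.Injective Φ := by
  set K := AlgebraicClosure k
  rw [injective_iff_map_eq_zero]
  intro x hx
  classical
  set B := Module.Basis.ofVectorSpace k K with hB
  let e : K ⊗[k] SeqRing k ≃ₗ[k] (Module.Basis.ofVectorSpaceIndex k K →₀ SeqRing k) :=
    (TensorProduct.congr B.repr (LinearEquiv.refl k (SeqRing k))).trans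
      (TensorProduct.finsuppScalarLeft k (SeqRing k) _)
  set g := e x with hg
  -- e.symm of a single
  have hsingle : ∀ (b : Module.Basis.ofVectorSpaceIndex k K) (m : SeqRing k),
      e.symm (Finsupp.single b m) = (b : K) ⊗ₜ[k] m := by
    intro b m
    show (TensorProduct.congr B.repr (LinearEquiv.refl k (SeqRing k))).symm
      ((TensorProduct.finsuppScalarLeft k (SeqRing k) _).symm (Finsupp.single b m)) = _
    rw [TensorProduct.finsuppScalarLeft_symm_apply_single, TensorProduct.congr_symm_tmul]
    simp [Module.Basis.repr_symm_single_one, hB, Module.Basis.ofVectorSpace_apply_self]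
  have hx' : x = ∑ b ∈ g.support, (b : K) ⊗ₜ[k] g b := by
    calc x = e.symm g := (e.symm_apply_apply x).symm
    _ = e.symm (∑ b ∈ g.support, Finsupp.single b (g b)) :=
          congrArg e.symm (Finsupp.sum_single g).symm
    _ = ∑ b ∈ g.support, e.symm (Finsupp.single b (g b)) := map_sum _ _ _
    _ = ∑ b ∈ g.support, (b : K) ⊗ₜ[k] g b := Finset.sum_congr rfl fun b _ => hsingle b _
  -- representatives
  have hout : ∀ b : Module.Basis.ofVectorSpaceIndex k K, ((g b).out : SeqRing k) = g b :=
    fun b => Quotient.out_eq _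
  have hΦx : Φ x =
      ((fun n => ∑ b ∈ g.support, (b : K) * algebraMap k K ((g b).out n)) : SeqRing K) := by
    rw [hx', map_sum]
    rw [show ((fun n => ∑ b ∈ g.support, (b : K) * algebraMap k K ((g b).out n)) : SeqRing K)
        = Filter.Germ.coeRingHom _ (∑ b ∈ g.support,
            fun n => (b : K) * algebraMap k K ((g b).out n)) by
      congr 1; ext n; simp [Finset.sum_apply]]
    rw [map_sum]
    refine Finset.sum_congr rfl fun b _ => ?_
    have h1 : (b : K) ⊗ₜ[k] g b = (b : K) ⊗ₜ[k] (((g b).out : ℕ → k) : SeqRing k) := by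
      rw [hout]
    rw [h1, hΦ]
    rfl
  rw [hΦx] at hx
  have hev : ∀ᶠ n in atTop, ∑ b ∈ g.support, (b : K) * algebraMap k K ((g b).out n) = 0 := by
    have := Filter.Germ.coe_eq.mp (by rw [hx]; rfl :
      ((fun n => ∑ b ∈ g.support, (b : K) * algebraMap k K ((g b).out n)) : SeqRing K)
        = ((0 : ℕ → K) : SeqRing K))
    exact this
  have hb0 : ∀ b ∈ g.support, g b = 0 := by
    intro b hb
    have hfev : (g b).out =ᶠ[atTop] (0 : ℕ → k) := by
      refine hev.mono fun n hn => ?_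
      have hsum : ∑ c ∈ g.support, ((g c).out n) • (B c : K) = 0 := by
        rw [← hn]
        refine Finset.sum_congr rfl fun c _ => ?_
        rw [Algebra.smul_def, mul_comm, hB, Module.Basis.ofVectorSpace_apply_self]
      have li := B.linearIndependent
      rw [linearIndependent_iff'] at li
      exact li g.support _ hsum b hb
    calc g b = ((g b).out : SeqRing k) := (hout b).symm
    _ = ((0 : ℕ → k) : SeqRing k) := Filter.Germ.coe_eq.mpr hfev
    _ = 0 := rfl
  have hg0 : g = 0 := by
    ext b
    by_cases h : b ∈ g.support
    · exact hb0 b h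
    · exact Finsupp.notMem_support_iff.mp h
  apply e.injective
  rw [← hg, hg0, map_zero]
end

section
/- Let L be a commutative ring with endomorphism σ, and suppose there exist orthogonal idempotents e₀, …, e_{l-1} ∈ L with e₀ + ⋯ + e_{l-1} = 1, σ(eⱼ) = e_{j+1 mod l}, and each eⱼL a field. Then L is σ-simple (the only ideals I of L with σ(I) ⊆ I are 0 and L), L is Noetherian, and every non-zero divisor of L is a unit. -/
section Aux

variable {L : Type*} [CommRing L] {l : ℕ} [NeZero l] {e : Fin l → L}

lemma aux_decomp (hsum : ∑ j, e j = 1) (x : L) : x = ∑ j, x * e j := by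
  rw [← Finset.mul_sum, hsum, mul_one]

lemma aux_e_mem (hfield : ∀ j, ∀ x : L, x * e j ≠ 0 → ∃ y : L, (x * e j) * (y * e j) = e j)
    {I : Ideal L} {x : L} (hx : x ∈ I) {j : Fin l} (hxj : x * e j ≠ 0) : e j ∈ I := by
  obtain ⟨y, hy⟩ := hfield j x hxj
  have h2 : e j = x * (e j * (y * e j)) := by linear_combination -hy
  rw [h2]
  exact Ideal.mul_mem_right _ _ hx

end Aux

open Fin.NatCast

/-- A σ-pseudo field: if a commutative ring `L` with endomorphism `σ` admits a complete
system of orthogonal idempotents `e₀, …, e_{l-1}` permuted cyclically by `σ` with each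
`eⱼL` a field, then `L` is σ-simple, Noetherian, and every non-zero divisor is a unit. -/
theorem sigma_pseudo_field_properties
    (L : Type*) [CommRing L] (σ : L →+* L)
    (l : ℕ) [NeZero l] (e : Fin l → L)
    (hidem : ∀ j, e j * e j = e j)
    (horth : ∀ j m, j ≠ m → e j * e m = 0)
    (hsum : ∑ j, e j = 1)
    (hcyc : ∀ j, σ (e j) = e (j + 1))
    (hne : ∀ j, e j ≠ 0)
    (hfield : ∀ j, ∀ x : L, x * e j ≠ 0 → ∃ y : L, (x * e j) * (y * e j) = e j) :
    (∀ I : Ideal L, (∀ x ∈ I, σ x ∈ I) → I = ⊥ ∨ I = ⊤) ∧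
    IsNoetherianRing L ∧
    (∀ x ∈ nonZeroDivisors L, IsUnit x) := by
  refine ⟨?_, ?_, ?_⟩
  · -- σ-simple
    intro I hI
    by_cases hbot : I = ⊥
    · exact Or.inl hbot
    right
    -- find a nonzero element
    obtain ⟨x, hxI, hx0⟩ := Submodule.exists_mem_ne_zero_of_ne_bot hbot
    -- some component is nonzero
    have hj : ∃ j, x * e j ≠ 0 := by
      by_contra h
      push_neg at h
      apply hx0
      rw [aux_decomp hsum x]
      exact Finset.sum_eq_zero fun j _ => h j
    obtain ⟨j, hj⟩ := hj
    have hej : e j ∈ I := aux_e_mem hfield hxI hj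
    -- all e m ∈ I by cyclic action
    have hstep : ∀ k : ℕ, e (j + (k : Fin l)) ∈ I := by
      intro k
      induction k with
      | zero => simpa using hej
      | succ n ih =>
        have := hI _ ih
        rw [hcyc] at this
        have hc : ((n : Fin l) + 1 : Fin l) = ((n + 1 : ℕ) : Fin l) := by
          push_cast; ring
        rw [add_assoc, hc] at this
        exact this
    have hall : ∀ m : Fin l, e m ∈ I := by
      intro m
      have := hstep ((m - j).val)
      rwa [Fin.cast_val_eq_self, add_sub_cancel] at this
    rw [Ideal.eq_top_iff_one, ← hsum]
    exact Ideal.sum_mem I fun m _ => hall m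
  · -- Noetherian
    rw [isNoetherianRing_iff_ideal_fg]
    intro I
    classical
    refine ⟨(Finset.univ.filter (fun j => e j ∈ I)).image e, ?_⟩
    apply le_antisymm
    · rw [Ideal.span_le]
      intro z hz
      simp only [Finset.coe_image, Set.mem_image, Finset.mem_coe, Finset.mem_filter] at hz
      obtain ⟨m, ⟨_, hm⟩, rfl⟩ := hz
      exact hm
    · intro x hx
      rw [aux_decomp hsum x]
      apply Ideal.sum_mem
      intro m _
      by_cases h0 : x * e m = 0
      · rw [h0]; exact Ideal.zero_mem _
      · have hm : e m ∈ I := aux_e_mem hfield hx h0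
        apply Ideal.mul_mem_left
        apply Ideal.subset_span
        simp only [Finset.coe_image, Set.mem_image, Finset.mem_coe, Finset.mem_filter]
        exact ⟨m, ⟨Finset.mem_univ m, hm⟩, rfl⟩
  · -- nonzerodivisors are units
    intro x hx
    have hxe : ∀ j, x * e j ≠ 0 := by
      intro j h
      exact hne j (hx.2 (e j) (by rw [mul_comm]; exact h))
    choose y hy using fun j => hfield j x (hxe j)
    refine IsUnit.of_mul_eq_one (∑ j, y j * e j) ?_
    rw [Finset.mul_sum, ← hsum]
    apply Finset.sum_congr rfl
    intro j _
    linear_combination hy j - x * y j * hidem j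
end

section
/- Let k be a field of characteristic zero, let R ⊆ Seq_k be a subring decomposing as R = e₀R ⊕ ⋯ ⊕ e_{l-1}R where eⱼ is the indicator sequence of j + ℕl, and suppose each eⱼR is an integral domain whose nonzero elements become units in a common overring of R inside Seq_k. Then for every g ∈ R the set {i ∈ ℕ : g(i) = 0} is (up to a finite set) a finite union of arithmetic progressions, each of period l. -/
open Filter

/-- The indicator sequence of the arithmetic progression `j + ℕl` (as a germ, i.e. of the
residue class `j mod l`). -/
noncomputable def indAP (k : Type*) [CommRing k] (l : ℕ) (j : Fin l) : SeqRing k :=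
  ((fun i : ℕ => if i % l = (j : ℕ) then (1 : k) else 0) : SeqRing k)

/-- If `R ⊆ Seq_k` decomposes as `R = e₀R ⊕ ⋯ ⊕ e_{l-1}R` with `eⱼ` the indicator of
`j + ℕl`, each `eⱼR` an integral domain whose nonzero elements become units in a common
overring `S` of `R` inside `Seq_k`, then the zero set of every `g ∈ R` is, up to a finite
set, a finite union of arithmetic progressions of period `l`. -/
theorem zero_set_of_elements_of_pv_ring (k : Type*) [Field k] [CharZero k]
    (l : ℕ) [NeZero l] (R S : Subring (SeqRing k)) (hRS : R ≤ S)
    (he : ∀ j : Fin l, indAP k l j ∈ R)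
    (hdom : ∀ j : Fin l, ∀ x ∈ R, ∀ y ∈ R,
      (indAP k l j * x) * (indAP k l j * y) = 0 → indAP k l j * x = 0 ∨ indAP k l j * y = 0)
    (hunit : ∀ j : Fin l, ∀ x ∈ R, indAP k l j * x ≠ 0 →
      ∃ y ∈ S, (indAP k l j * x) * y = indAP k l j) :
    ∀ g : ℕ → k, (g : SeqRing k) ∈ R →
      ∃ J : Finset (Fin l),
        (symmDiff {i : ℕ | g i = 0} {i : ℕ | ∃ j ∈ J, i % l = (j : ℕ)}).Finite :=  by
  intro g hg
  classical
  have key : ∀ j : Fin l, ∀ᶠ i in (atTop : Filter ℕ),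
      i % l = (j : ℕ) → (g i = 0 ↔ indAP k l j * (g : SeqRing k) = 0) := by
    intro j
    by_cases h0 : indAP k l j * (g : SeqRing k) = 0
    · have hev : (fun i => (if i % l = (j : ℕ) then (1 : k) else 0) * g i)
          =ᶠ[(atTop : Filter ℕ)] (fun _ => (0 : k)) := by
        rw [← Filter.Germ.coe_eq]
        exact h0
      filter_upwards [hev] with i hi hij
      simp only [hij, if_pos, one_mul] at hi
      simp [h0, hi]
    · obtain ⟨y, hyS, hy⟩ := hunit j g hg h0
      obtain ⟨yf, rfl⟩ : ∃ f : ℕ → k, (f : SeqRing k) = y := ⟨_, Quotient.out_eq' y⟩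
      have hev : (fun i => (if i % l = (j : ℕ) then (1 : k) else 0) * g i * yf i)
          =ᶠ[(atTop : Filter ℕ)] (fun i => if i % l = (j : ℕ) then (1 : k) else 0) := by
        rw [← Filter.Germ.coe_eq]
        exact hy
      filter_upwards [hev] with i hi hij
      simp only [hij, if_pos, one_mul] at hi
      have hgne : g i ≠ 0 := by
        intro h
        rw [h, zero_mul] at hi
        exact one_ne_zero hi.symm
      simp [h0, hgne]
  set J : Finset (Fin l) :=
    Finset.univ.filter (fun j => indAP k l j * (g : SeqRing k) = 0) with hJ
  refine ⟨J, ?_⟩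
  have hall : ∀ᶠ i in (atTop : Filter ℕ),
      ∀ j : Fin l, i % l = (j : ℕ) → (g i = 0 ↔ indAP k l j * (g : SeqRing k) = 0) :=
    eventually_all.2 key
  have hall2 : ∀ᶠ i in (Filter.cofinite : Filter ℕ),
      ∀ j : Fin l, i % l = (j : ℕ) → (g i = 0 ↔ indAP k l j * (g : SeqRing k) = 0) := by
    rw [Nat.cofinite_eq_atTop]; exact hall
  rw [Filter.eventually_cofinite] at hall2
  refine hall2.subset ?_
  intro i hi
  simp only [Set.mem_setOf_eq]
  intro hprop
  set j : Fin l := ⟨i % l, Nat.mod_lt i (NeZero.pos l)⟩ with hj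
  have hP := hprop j rfl
  have hiB : (∃ j' ∈ J, i % l = (j' : ℕ)) ↔ j ∈ J := by
    constructor
    · rintro ⟨j', hj', hmod⟩
      have : j' = j := Fin.ext hmod.symm
      rwa [this] at hj'
    · intro h; exact ⟨j, h, rfl⟩
  have hJmem : j ∈ J ↔ indAP k l j * (g : SeqRing k) = 0 := by
    simp [hJ]
  rcases Set.mem_symmDiff.mp hi with ⟨h1, h2⟩ | ⟨h1, h2⟩
  · exact h2 (hiB.mpr (hJmem.mpr (hP.mp h1)))
  · exact h2 (hP.mpr (hJmem.mp (hiB.mp h1)))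
end

section
/- Let k be a field of characteristic zero and f : ℕ → k a sequence satisfying, for all sufficiently large i, the recurrence f(i+n) + h_{n-1}(i)f(i+n-1) + ⋯ + h₀·f(i) = 0, where h₁, …, h_{n-1} ∈ k[z] are polynomials and h₀ ∈ k is a nonzero constant. Assume the Dynamical Mordell–Lang property holds for the automorphism σ(b, B) = (b+1, A(b)B) of X = 𝔸¹ × GLₙ over k, where A is the companion matrix of the recurrence (this is a theorem of Bell for polynomial automorphisms of affine varieties). Then the set {i ∈ ℕ : f(i) = 0} is, up to a finite set, a finite union of arithmetic progressions. -/
open Filter Polynomial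

/-- The arithmetic progression `{j + n·l : n ∈ ℕ}`. -/
def ArithProg (j l : ℕ) : Set ℕ := {m | ∃ n : ℕ, m = j + n * l}

/-- A subset of `ℕ` is a finite union of arithmetic progressions. -/
def IsFinUnionAP (S : Set ℕ) : Prop :=
  ∃ s : Finset (ℕ × ℕ), S = ⋃ p ∈ s, ArithProg p.1 p.2

/-- The companion matrix `A(E)` of the difference equation with coefficients
`h₀, …, h_{n-1}`, evaluated at `b`. -/
noncomputable def companionAt {k : Type*} [Field k] {n : ℕ} (h : Fin n → Polynomial k)
    (b : k) : Matrix (Fin n) (Fin n) k :=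
  Matrix.of fun r c : Fin n =>
    if (r : ℕ) + 1 = (c : ℕ) then 1
    else if (r : ℕ) = n - 1 then -((h c).eval b) else 0

/-- The automorphism `σ(b, B) = (b+1, A(b)·B)` of `𝔸¹ × GLₙ` (on `k`-points). -/
noncomputable def dynStep {k : Type*} [Field k] {n : ℕ} (h : Fin n → Polynomial k)
    (x : k × Matrix (Fin n) (Fin n) k) : k × Matrix (Fin n) (Fin n) k :=
  (x.1 + 1, companionAt h x.1 * x.2)


lemma isFinUnionAP_shift {S : Set ℕ} (hS : IsFinUnionAP S) (i₀ : ℕ) :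
    IsFinUnionAP ((fun m => i₀ + m) '' S) := by
  obtain ⟨s, rfl⟩ := hS
  refine ⟨s.image (fun p => (i₀ + p.1, p.2)), ?_⟩
  ext m
  simp only [Set.mem_image, Set.mem_iUnion, Finset.mem_image, ArithProg, Set.mem_setOf_eq]
  constructor
  · rintro ⟨x, ⟨p, hp, n, rfl⟩, rfl⟩
    exact ⟨(i₀ + p.1, p.2), ⟨p, hp, rfl⟩, n, by ring⟩
  · rintro ⟨q, ⟨p, hp, rfl⟩, n, rfl⟩
    exact ⟨p.1 + n * p.2, ⟨p, hp, n, rfl⟩, by ring⟩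

/-- Skolem-Mahler-Lech with polynomial coefficients and constant `h₀`: if `f : ℕ → k`
eventually satisfies `f(i+n) + h_{n-1}(i)f(i+n-1) + ⋯ + h₀f(i) = 0` with
`h₁, …, h_{n-1} ∈ k[z]` and `h₀ ∈ k∖{0}`, and the Dynamical Mordell-Lang property holds
for the automorphism `σ(b,B) = (b+1, A(b)B)` of `𝔸¹ × GLₙ` (Bell's theorem), then the zero
set of `f` is, up to a finite set, a finite union of arithmetic progressions. -/
theorem skolem_mahler_lech_polynomial_coeffs
    (k : Type*) [Field k] [CharZero k] (n : ℕ) [NeZero n]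
    (h : Fin n → Polynomial k) (h0 : k) (hh0 : h0 ≠ 0)
    (hconst : h 0 = Polynomial.C h0)
    (f : ℕ → k)
    (hrec : ∀ᶠ i in Filter.atTop,
      f (i + n) + ∑ m : Fin n, (h m).eval ((i : ℕ) : k) * f (i + (m : ℕ)) = 0)
    (hDML : ∀ x : k × Matrix (Fin n) (Fin n) k, IsUnit x.2.det →
      ∀ S : Finset (MvPolynomial (Unit ⊕ Fin n × Fin n) k),
        IsFinUnionAP {i : ℕ | ∀ p ∈ S,
          MvPolynomial.eval
            (Sum.elim (fun _ : Unit => ((dynStep h)^[i] x).1)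
              (fun rc : Fin n × Fin n => ((dynStep h)^[i] x).2 rc.1 rc.2)) p = 0}) :
    ∃ U : Set ℕ, IsFinUnionAP U ∧ (symmDiff {i : ℕ | f i = 0} U).Finite := by
  rw [Filter.eventually_atTop] at hrec
  obtain ⟨i₀, hi₀⟩ := hrec
  have hn : 0 < n := Nat.pos_of_ne_zero (NeZero.ne n)
  set x : k × Matrix (Fin n) (Fin n) k := (((i₀ : ℕ) : k), 1) with hx
  have key : ∀ i : ℕ,
      ((dynStep h)^[i] x).1 = ((i₀ + i : ℕ) : k) ∧
      ∀ r : Fin n, (∑ c : Fin n, ((dynStep h)^[i] x).2 r c * f (i₀ + c)) = f (i₀ + i + r) := by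
    intro i
    induction i with
    | zero =>
      refine ⟨by simp [hx], fun r => ?_⟩
      simp [hx, Matrix.one_apply, ite_mul]
    | succ i ih =>
      obtain ⟨ih1, ih2⟩ := ih
      set y := (dynStep h)^[i] x with hy
      rw [Function.iterate_succ_apply']
      constructor
      · show y.1 + 1 = _
        rw [ih1]; push_cast; ring
      · intro r
        show (∑ c : Fin n, (companionAt h y.1 * y.2) r c * f (i₀ + c)) = _
        have step : (∑ c : Fin n, (companionAt h y.1 * y.2) r c * f (i₀ + c))
            = ∑ j : Fin n, companionAt h y.1 r j * f (i₀ + i + j) := by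
          simp only [Matrix.mul_apply, Finset.sum_mul]
          rw [Finset.sum_comm]
          refine Finset.sum_congr rfl fun j _ => ?_
          rw [← ih2 j, Finset.mul_sum]
          exact Finset.sum_congr rfl fun c _ => by ring
        rw [step]
        by_cases hr : (r : ℕ) = n - 1
        · have hA : ∀ j : Fin n, companionAt h y.1 r j = -((h j).eval y.1) := by
            intro j
            have hja : ¬ ((r : ℕ) + 1 = (j : ℕ)) := by have := j.isLt; omega
            simp only [companionAt, Matrix.of_apply, if_neg hja, if_pos hr]
          have hrec' := hi₀ (i₀ + i) (Nat.le_add_right _ _)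
          have hsum : (∑ j : Fin n, companionAt h y.1 r j * f (i₀ + i + j))
              = -(∑ m : Fin n, (h m).eval (((i₀ + i : ℕ) : k)) * f (i₀ + i + (m : ℕ))) := by
            rw [← Finset.sum_neg_distrib]
            refine Finset.sum_congr rfl fun j _ => ?_
            rw [hA j, ih1]; ring
          rw [hsum]
          have : f (i₀ + i + n) = -(∑ m : Fin n, (h m).eval (((i₀ + i : ℕ) : k)) * f (i₀ + i + (m : ℕ))) := by
            linear_combination hrec'
          rw [← this]
          congr 1
          omega
        · have hrlt : (r : ℕ) + 1 < n := by
            have := r.isLt; omega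
          have hsum : (∑ j : Fin n, companionAt h y.1 r j * f (i₀ + i + j))
              = f (i₀ + i + ((r : ℕ) + 1)) := by
            rw [Finset.sum_eq_single (⟨(r : ℕ) + 1, hrlt⟩ : Fin n)]
            · simp [companionAt]
            · intro j _ hj
              have h1 : ¬ ((r : ℕ) + 1 = (j : ℕ)) := fun hc => hj (Fin.ext hc.symm)
              simp [companionAt, h1, hr]
            · intro hmem
              exact absurd (Finset.mem_univ _) hmem
          rw [hsum]
          congr 1
          omega
  set g : ℕ → (Unit ⊕ Fin n × Fin n) → k := fun i =>
    Sum.elim (fun _ : Unit => ((dynStep h)^[i] x).1)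
      (fun rc : Fin n × Fin n => ((dynStep h)^[i] x).2 rc.1 rc.2) with hg
  set p : MvPolynomial (Unit ⊕ Fin n × Fin n) k :=
    ∑ c : Fin n, MvPolynomial.C (f (i₀ + c)) * MvPolynomial.X (Sum.inr ((⟨0, hn⟩ : Fin n), c)) with hp
  have heval : ∀ i : ℕ, MvPolynomial.eval (g i) p = f (i₀ + i) := by
    intro i
    have := (key i).2 ⟨0, hn⟩
    simp only [Fin.val_mk, add_zero] at this
    simp only [hp, map_sum, map_mul, MvPolynomial.eval_C, MvPolynomial.eval_X, hg,
      Sum.elim_inr]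
    rw [← this]
    · refine Finset.sum_congr rfl fun c _ => by ring
  have hdet : IsUnit (x.2.det) := by simp [hx]
  have hT := hDML x hdet {p}
  have hTeq : {i : ℕ | ∀ q ∈ ({p} : Finset (MvPolynomial (Unit ⊕ Fin n × Fin n) k)),
      MvPolynomial.eval
        (Sum.elim (fun _ : Unit => ((dynStep h)^[i] x).1)
          (fun rc : Fin n × Fin n => ((dynStep h)^[i] x).2 rc.1 rc.2)) q = 0}
      = {i : ℕ | f (i₀ + i) = 0} := by
    ext i
    simp only [Finset.mem_singleton, Set.mem_setOf_eq, forall_eq]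
    rw [show (Sum.elim (fun _ : Unit => ((dynStep h)^[i] x).1)
          (fun rc : Fin n × Fin n => ((dynStep h)^[i] x).2 rc.1 rc.2)) = g i from rfl,
      heval i]
  rw [hTeq] at hT
  refine ⟨(fun m => i₀ + m) '' {i : ℕ | f (i₀ + i) = 0}, isFinUnionAP_shift hT i₀, ?_⟩
  refine Set.Finite.subset (Set.finite_Iio i₀) fun i hi => ?_
  by_contra hlt
  simp only [Set.mem_Iio, not_lt] at hlt
  have hiU : i ∈ (fun m => i₀ + m) '' {j : ℕ | f (i₀ + j) = 0} ↔ f i = 0 := by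
    constructor
    · rintro ⟨m, hm, rfl⟩; exact hm
    · intro hf
      exact ⟨i - i₀, by simpa [Nat.add_sub_cancel' hlt] using hf,
        Nat.add_sub_cancel' hlt⟩
  rw [Set.mem_symmDiff] at hi
  rcases hi with ⟨h1, h2⟩ | ⟨h1, h2⟩
  · exact h2 (hiU.mpr h1)
  · exact h2 (hiU.mp h1)
end
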